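/- arXiv:1709.02036 — 3 statements merged into one kernel-verified Lean document; each statement's English description precedes it below -/
import Mathlib

section
/- Let $(G_n)_{n\geq 0}$ be a sequence of groups with associative unital homomorphisms $\oplus: G_m \times G_n \to G_{m+n}$ as above, satisfying condition $(\dagger')$: for every $n$ and every $a \in G_n$ there exists $c$ in the commutator subgroup $G_{2n}'$ of $G_{2n}$ with $a \oplus e_n = (e_n \oplus a) c$. Let $G_\infty = \operatorname{colim}_n G_n$ be the colimit along the maps $- \oplus e_1: G_n \to G_{n+1}$. Then the commutator subgroup of $G_\infty$ is perfect. -/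
/-- Iterated right stabilisation `G n → G k` (for `n ≤ k`) by the unit `e₁ ∈ G 1`. -/
def stabTo (G : ℕ → Type*) [∀ n, Group (G n)]
    (op : ∀ m n, G m → G n → G (m + n)) {n k : ℕ} (h : n ≤ k) : G n → G k :=
  Nat.leRecOn h (fun {m} (a : G m) => op m 1 a 1)

open scoped commutatorElement

private lemma conj_helper1 {Γ : Type*} [Group Γ] (x v c : Γ) (h : x * v = v * x) :
    ⁅x, v * c⁆ = v * ⁅x, c⁆ * v⁻¹ := by
  rw [commutatorElement_def, commutatorElement_def,
    show x * (v * c) * x⁻¹ * (v * c)⁻¹ = (x * v) * (c * x⁻¹ * c⁻¹ * v⁻¹) from by group, h]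
  group

private lemma conj_helper2 {Γ : Type*} [Group Γ] (w d c : Γ) (h : w * c = c * w) :
    ⁅w * d, c⁆ = w * ⁅d, c⁆ * w⁻¹ := by
  have h' : c⁻¹ * w⁻¹ = w⁻¹ * c⁻¹ := by
    have := congrArg (·⁻¹) h
    simpa [mul_inv_rev] using this
  rw [commutatorElement_def, commutatorElement_def,
    show (w * d) * c * (w * d)⁻¹ * c⁻¹ = w * (d * c * d⁻¹) * (w⁻¹ * c⁻¹) from by group, ← h']
  group

/-- Let `(G n)` be a sequence of groups with associative, unital homomorphic pairings
`⊕ : G m × G n → G (m+n)` satisfying condition `(†')`: for every `n` and `a ∈ G n`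
there is `c ∈ G_{2n}'` with `a ⊕ e_n = (e_n ⊕ a) c`.  Let `Ginf` be the colimit of the
system `-⊕e₁ : G n → G (n+1)` (with structure maps `ι n : G n → Ginf`, which are
compatible, jointly surjective, and identify exactly eventually-equal elements).
Then the commutator subgroup of `Ginf` is perfect. -/
theorem commutator_of_colimit_perfect
    (G : ℕ → Type*) [∀ n, Group (G n)]
    (op : ∀ m n, G m → G n → G (m + n))
    (hop : ∀ m n (a a' : G m) (b b' : G n),
      op m n (a * a') (b * b') = op m n a b * op m n a' b')
    (hassoc : ∀ m n k (a : G m) (b : G n) (c : G k),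
      op (m + n) k (op m n a b) c
        = cast (congrArg G (Nat.add_assoc m n k).symm) (op m (n + k) a (op n k b c)))
    (hunit_left : ∀ n (a : G n), op 0 n 1 a = cast (congrArg G (Nat.zero_add n).symm) a)
    (hunit_right : ∀ m (a : G m), op m 0 a 1 = a)
    (hdagger : ∀ n (a : G n), ∃ c ∈ commutator (G (n + n)),
      op n n a 1 = op n n 1 a * c)
    (Ginf : Type*) [Group Ginf] (ι : ∀ n, G n →* Ginf)
    (hcompat : ∀ n (a : G n), ι (n + 1) (op n 1 a 1) = ι n a)
    (hsurj : ∀ g : Ginf, ∃ n a, ι n a = g)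
    (hinj : ∀ n (a b : G n), ι n a = ι n b →
      ∃ k, ∃ h : n ≤ k, stabTo G op h a = stabTo G op h b) :
    ⁅commutator Ginf, commutator Ginf⁆ = commutator Ginf := by
  -- `op` sends the pair of units to the unit
  have hone : ∀ m n, op m n (1 : G m) (1 : G n) = 1 := by
    intro m n
    have h := hop m n 1 1 1 1
    rw [one_mul, one_mul] at h
    exact (left_eq_mul.mp h)
  -- right-stabilised and left-stabilised elements commute
  have hcomm : ∀ m n (A : G m) (B : G n),
      op m n A 1 * op m n 1 B = op m n 1 B * op m n A 1 := by
    intro m n A B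
    have h1 := hop m n A 1 1 B
    have h2 := hop m n 1 A B 1
    rw [mul_one, one_mul] at h1
    rw [one_mul, mul_one] at h2
    rw [← h1, h2]
  -- key colimit lemma: right stabilisation by any unit is invisible in the colimit
  have L : ∀ (k n : ℕ) (a : G n), ι (n + k) (op n k a 1) = ι n a := by
    intro k
    induction k with
    | zero => intro n a; rw [hunit_right]; rfl
    | succ k ih =>
      intro n a
      have h1 : op (n + k) 1 (op n k a 1) 1 = op n (k + 1) a 1 := by
        rw [hassoc n k 1 a 1 1, hone k 1]
        exact cast_eq _ _
      have h2 : ι (n + (k + 1)) (op n (k + 1) a 1)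
          = ι ((n + k) + 1) (op (n + k) 1 (op n k a 1) 1) := by rw [h1]; rfl
      rw [h2, hcompat (n + k) (op n k a 1)]
      exact ih n a
  -- stabTo is invisible in the colimit
  have S : ∀ (n k : ℕ) (h : n ≤ k) (a : G n), ι k (stabTo G op h a) = ι n a := by
    intro n k h a
    induction h with
    | refl => rw [stabTo, Nat.leRecOn_self]
    | @step k h ih =>
      rw [stabTo, Nat.leRecOn_succ h]
      exact (hcompat k _).trans ih
  -- ι maps commutator subgroups into the commutator subgroup
  have hmap : ∀ (M : ℕ) (z : G M), z ∈ commutator (G M) → ι M z ∈ commutator Ginf := by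
    intro M z hz
    have h1 : ι M z ∈ (commutator (G M)).map (ι M) := ⟨z, hz, rfl⟩
    rw [commutator_def, Subgroup.map_commutator] at h1
    rw [commutator_def]
    exact Subgroup.commutator_mono le_top le_top h1
  set H := commutator Ginf with hH
  haveI : (⁅H, H⁆ : Subgroup Ginf).Normal := by
    rw [hH, commutator_def]
    exact Subgroup.commutator_normal _ _
  apply le_antisymm
  · calc ⁅H, H⁆ ≤ ⁅(⊤ : Subgroup Ginf), ⊤⁆ := Subgroup.commutator_mono le_top le_top
    _ = H := (commutator_def Ginf).symm
  · -- the key claim, for two elements at the same level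
    have claim : ∀ (N : ℕ) (A B : G N), ⁅ι N A, ι N B⁆ ∈ (⁅H, H⁆ : Subgroup Ginf) := by
      intro N A B
      set M := N + N with hM
      obtain ⟨cb, hcb, hBeq⟩ := hdagger N B
      set A₂ : G M := op N N A 1 with hA₂
      obtain ⟨ca, hca, hAeq⟩ := hdagger M A₂
      set v : Ginf := ι M (op N N 1 B) with hv
      set c : Ginf := ι M cb with hc
      set w : Ginf := ι (M + M) (op M M 1 A₂) with hw
      set d : Ginf := ι (M + M) ca with hd
      have hcH : c ∈ H := hmap M cb hcb
      have hdH : d ∈ H := hmap (M + M) ca hca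
      -- y = v * c
      have hy : ι N B = v * c := by
        rw [← L N N B, hBeq, map_mul]
      -- x = ι M A₂
      have hxM : ι N A = ι M A₂ := (L N N A).symm
      -- x = w * d
      have hx : ι N A = w * d := by
        rw [hxM, ← L M M A₂, hAeq, map_mul]
      -- x commutes with v
      have hxv : ι N A * v = v * ι N A := by
        rw [hxM, hv, hA₂, ← map_mul, ← map_mul, hcomm N N A B]
      -- w commutes with c
      have hwc : w * c = c * w := by
        have hc2 : c = ι (M + M) (op M M cb 1) := (L M M cb).symm
        rw [hw, hc2, ← map_mul, ← map_mul, ← hcomm M M cb A₂]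
      have key : ⁅ι N A, ι N B⁆ = v * (w * ⁅d, c⁆ * w⁻¹) * v⁻¹ := by
        rw [hy, conj_helper1 _ _ _ hxv, hx, conj_helper2 _ _ _ hwc]
      rw [key]
      have hdc : ⁅d, c⁆ ∈ (⁅H, H⁆ : Subgroup Ginf) :=
        Subgroup.commutator_mem_commutator hdH hcH
      exact Subgroup.Normal.conj_mem ‹(⁅H, H⁆ : Subgroup Ginf).Normal› _
        (Subgroup.Normal.conj_mem ‹(⁅H, H⁆ : Subgroup Ginf).Normal› _ hdc w) v
    rw [hH, commutator_def, Subgroup.commutator_le]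
    intro x _ y _
    obtain ⟨n, a, rfl⟩ := hsurj x
    obtain ⟨m, b, rfl⟩ := hsurj y
    rw [← S n (max n m) (le_max_left n m) a, ← S m (max n m) (le_max_right n m) b]
    exact claim (max n m) _ _
end

section
/- Let $(G_n)_{n\geq 0}$ be a sequence of groups with associative unital homomorphisms $\oplus: G_m \times G_n \to G_{m+n}$ satisfying $(\dagger')$ (for every $n$ and $a \in G_n$ there exists $c \in G_{2n}'$ with $a \oplus e_n = (e_n \oplus a) c$). Then every commutator $[a,b]$ of elements $a, b$ in the colimit $G_\infty = \operatorname{colim}_n G_n$ is conjugate in $G_\infty$ to a commutator $[c,d]$ with $c, d$ in the commutator subgroup $G_\infty'$. -/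
open scoped commutatorElement

/-- Let `(G n)` be a sequence of groups with associative, unital homomorphic pairings
`⊕ : G m × G n → G (m+n)` satisfying condition `(†')`: for every `n` and `a ∈ G n`
there is `c ∈ G_{2n}'` with `a ⊕ e_n = (e_n ⊕ a) c`.  Let `Ginf` be the colimit of the
system `-⊕e₁ : G n → G (n+1)` (with structure maps `ι n : G n → Ginf`, which are
compatible, jointly surjective, and identify exactly eventually-equal elements).
Then every commutator `⁅x,y⁆` in `Ginf` is conjugate to a commutator `⁅c,d⁆` with `c, d` in the commutator subgroup of `Ginf`. -/
theorem commutator_conjugate_in_colimit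
    (G : ℕ → Type*) [∀ n, Group (G n)]
    (op : ∀ m n, G m → G n → G (m + n))
    (hop : ∀ m n (a a' : G m) (b b' : G n),
      op m n (a * a') (b * b') = op m n a b * op m n a' b')
    (hassoc : ∀ m n k (a : G m) (b : G n) (c : G k),
      op (m + n) k (op m n a b) c
        = cast (congrArg G (Nat.add_assoc m n k).symm) (op m (n + k) a (op n k b c)))
    (hunit_left : ∀ n (a : G n), op 0 n 1 a = cast (congrArg G (Nat.zero_add n).symm) a)
    (hunit_right : ∀ m (a : G m), op m 0 a 1 = a)
    (hdagger : ∀ n (a : G n), ∃ c ∈ commutator (G (n + n)),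
      op n n a 1 = op n n 1 a * c)
    (Ginf : Type*) [Group Ginf] (ι : ∀ n, G n →* Ginf)
    (hcompat : ∀ n (a : G n), ι (n + 1) (op n 1 a 1) = ι n a)
    (hsurj : ∀ g : Ginf, ∃ n a, ι n a = g)
    (hinj : ∀ n (a b : G n), ι n a = ι n b →
      ∃ k, ∃ h : n ≤ k, stabTo G op h a = stabTo G op h b) :
    ∀ x y : Ginf, ∃ v c d : Ginf, c ∈ commutator Ginf ∧ d ∈ commutator Ginf ∧
      ⁅x, y⁆ = v * ⁅c, d⁆ * v⁻¹ := by
  -- `op` sends pairs of units to the unit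
  have one_op : ∀ m n, op m n (1 : G m) (1 : G n) = 1 := by
    intro m n
    have h := hop m n 1 1 1 1
    simp only [one_mul] at h
    exact left_eq_mul.mp h
  -- right stabilisation by units does not change the image in the colimit
  have ι_stab : ∀ (k n : ℕ) (a : G n), ι (n + k) (op n k a 1) = ι n a := by
    intro k
    induction k with
    | zero => intro n a; rw [hunit_right]; rfl
    | succ k IH =>
        intro n a
        have h1 : op (n + k) 1 (op n k a 1) (1 : G 1) = op n (k + 1) a 1 := by
          rw [hassoc n k 1 a 1 1, one_op k 1]
          exact cast_eq _ _
        calc ι (n + (k + 1)) (op n (k + 1) a 1)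
            = ι ((n + k) + 1) (op (n + k) 1 (op n k a 1) 1) := by rw [h1]; rfl
          _ = ι (n + k) (op n k a 1) := hcompat _ _
          _ = ι n a := IH n a
  -- transport along equalities of indices
  have cast_ι : ∀ {p q : ℕ} (h : p = q) (a : G p),
      ι q (cast (congrArg G h) a) = ι p a := by
    intro p q h a; subst h; rw [cast_eq]
  -- images of commutator subgroups land in the commutator subgroup
  have ι_comm : ∀ (k : ℕ) (c : G k), c ∈ commutator (G k) → ι k c ∈ commutator Ginf := by
    intro k c hc
    have h1 : ι k c ∈ (commutator (G k)).map (ι k) := Subgroup.mem_map_of_mem _ hc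
    rw [commutator_def, Subgroup.map_commutator] at h1
    exact (Subgroup.commutator_mono le_top le_top) h1
  -- main step: ⁅x,y⁆ is conjugate to ⁅x,γ⁆ with γ in the commutator subgroup
  have step : ∀ x y : Ginf, ∃ w γ : Ginf, γ ∈ commutator Ginf ∧
      ⁅x, y⁆ = w * ⁅x, γ⁆ * w⁻¹ := by
    intro x y
    obtain ⟨n, a, hx⟩ := hsurj x
    obtain ⟨m, b, hy⟩ := hsurj y
    set N := n + m with hN
    set a' : G N := op n m a 1 with ha'
    set b' : G N := cast (congrArg G (Nat.add_comm m n)) (op m n b 1) with hb'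
    have hxa : ι N a' = x := by rw [ha', ι_stab m n a, hx]
    have hyb : ι N b' = y := by rw [hb', cast_ι (Nat.add_comm m n), ι_stab n m b, hy]
    obtain ⟨c, hc, hcb⟩ := hdagger N b'
    refine ⟨ι (N + N) (op N N 1 b'), ι (N + N) c, ι_comm _ _ hc, ?_⟩
    set u := ι (N + N) (op N N a' 1) with hu
    set w := ι (N + N) (op N N 1 b') with hw
    set γ := ι (N + N) c with hγ
    have hux : u = x := by rw [hu, ι_stab N N a', hxa]
    have hwγ : w * γ = y := by
      rw [hw, hγ, ← map_mul, ← hcb, ι_stab N N b', hyb]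
    have huw : u * w = w * u := by
      rw [hu, hw, ← map_mul, ← map_mul, ← hop, ← hop, one_mul, mul_one, one_mul, mul_one]
    calc ⁅x, y⁆ = ⁅u, w * γ⁆ := by rw [hux, hwγ]
      _ = (u * w) * (γ * u⁻¹ * γ⁻¹ * w⁻¹) := by group
      _ = (w * u) * (γ * u⁻¹ * γ⁻¹ * w⁻¹) := by rw [huw]
      _ = w * ⁅u, γ⁆ * w⁻¹ := by group
      _ = w * ⁅x, γ⁆ * w⁻¹ := by rw [hux]
  intro x y
  obtain ⟨w₁, γ, hγ, h1⟩ := step x y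
  obtain ⟨w₂, γ', hγ', h2⟩ := step γ x
  refine ⟨w₁ * w₂, γ', γ, hγ', hγ, ?_⟩
  have h3 : ⁅x, γ⁆ = w₂ * ⁅γ', γ⁆ * w₂⁻¹ := by
    rw [← commutatorElement_inv γ x, h2]
    group
  rw [h1, h3]
  group
end

section
/- Let $(G_n)_{n\geq 0}$ be a sequence of groups with associative unital homomorphisms $\oplus: G_m \times G_n \to G_{m+n}$, and suppose condition $(\dagger')$ holds only for a cofinal set $S \subseteq \mathbb{N}$ of indices (i.e., for every $n \in S$ and $a \in G_n$ there is $c \in G_{2n}'$ with $a \oplus e_n = (e_n \oplus a)c$, and $S$ is unbounded in $\mathbb{N}$). Then the commutator subgroup of $G_\infty = \operatorname{colim}_n G_n$ is perfect. -/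
open scoped commutatorElement

section Aux

lemma my_map_commutator {A B : Type*} [Group A] [Group B] (f : A →* B) {a : A}
    (ha : a ∈ commutator A) : f a ∈ commutator B := by
  have h1 : f a ∈ (commutator A).map f := Subgroup.mem_map_of_mem f ha
  rw [commutator_def, Subgroup.map_commutator] at h1
  rw [commutator_def]
  exact Subgroup.commutator_mono le_top le_top h1

lemma comm_aux1 {H : Type*} [Group H] (q c y : H) (h : q * y = y * q) :
    ⁅q * c, y⁆ = q * ⁅c, y⁆ * q⁻¹ := by
  have h' : q⁻¹ * y⁻¹ = y⁻¹ * q⁻¹ := by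
    rw [← mul_inv_rev, ← mul_inv_rev, h]
  simp only [commutatorElement_def, mul_inv_rev, mul_assoc]
  rw [h']

lemma comm_aux2 {H : Type*} [Group H] (u r v : H) (h : u * r = r * u) :
    ⁅u, r * v⁆ = r * ⁅u, v⁆ * r⁻¹ := by
  simp only [commutatorElement_def, mul_inv_rev, mul_assoc]
  rw [← mul_assoc, ← mul_assoc, h, mul_assoc, mul_assoc]

variable (G : ℕ → Type*) [∀ n, Group (G n)] (op : ∀ m n, G m → G n → G (m + n))
  (hop : ∀ m n (a a' : G m) (b b' : G n),
      op m n (a * a') (b * b') = op m n a b * op m n a' b')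

include hop in
lemma aux_one_op_one (m n : ℕ) : op m n 1 1 = 1 := by
  have h : op m n 1 1 * 1 = op m n 1 1 * op m n 1 1 := by
    simpa using hop m n 1 1 1 1
  exact (mul_left_cancel h).symm

lemma stab_self (n : ℕ) (a : G n) : stabTo G op (le_refl n) a = a :=
  Nat.leRecOn_self a

lemma stab_succ {n m : ℕ} (h1 : n ≤ m) {h2 : n ≤ m + 1} (a : G n) :
    stabTo G op h2 a = op m 1 (stabTo G op h1 a) 1 :=
  Nat.leRecOn_succ h1 a

include hop in
lemma aux_stab_mul {n k : ℕ} (h : n ≤ k) (a b : G n) :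
    stabTo G op h (a * b) = stabTo G op h a * stabTo G op h b := by
  induction k, h using Nat.le_induction with
  | base => rw [stab_self, stab_self, stab_self]
  | succ k hk ih =>
    rw [stab_succ G op hk (a * b), stab_succ G op hk a, stab_succ G op hk b, ih]
    have h5 := hop k 1 (stabTo G op hk a) (stabTo G op hk b) 1 1
    rwa [one_mul] at h5

/-- `stabTo` as a monoid hom. -/
def stabToHom {n k : ℕ} (h : n ≤ k) : G n →* G k where
  toFun := stabTo G op h
  map_one' := by
    have h1 := aux_stab_mul G op hop h 1 1
    rw [one_mul] at h1
    exact (mul_left_cancel (a := stabTo G op h 1) (by rw [← h1, mul_one])).symm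
  map_mul' := aux_stab_mul G op hop h

/-- Right stabilisation by the unit of `G k`, as a monoid hom. -/
def opRightHom (m k : ℕ) : G m →* G (m + k) where
  toFun a := op m k a 1
  map_one' := aux_one_op_one G op hop m k
  map_mul' a b := by
    have := hop m k a b 1 1
    rwa [one_mul] at this

end Aux

/-- Let `(G n)` be a sequence of groups with associative, unital homomorphic pairings
`⊕ : G m × G n → G (m+n)` satisfying condition `(†')` for a cofinal set `S ⊆ ℕ` of indices: for every `n ∈ S` and
`a ∈ G n` there is `c ∈ G_{2n}'` with `a ⊕ e_n = (e_n ⊕ a) c`.  Let `Ginf` be the colimit of the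
system `-⊕e₁ : G n → G (n+1)` (with structure maps `ι n : G n → Ginf`, which are
compatible, jointly surjective, and identify exactly eventually-equal elements).
Then the commutator subgroup of `Ginf` is perfect. -/
theorem commutator_of_colimit_perfect_of_cofinal_dagger
    (G : ℕ → Type*) [∀ n, Group (G n)]
    (op : ∀ m n, G m → G n → G (m + n))
    (hop : ∀ m n (a a' : G m) (b b' : G n),
      op m n (a * a') (b * b') = op m n a b * op m n a' b')
    (hassoc : ∀ m n k (a : G m) (b : G n) (c : G k),
      op (m + n) k (op m n a b) c
        = cast (congrArg G (Nat.add_assoc m n k).symm) (op m (n + k) a (op n k b c)))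
    (hunit_left : ∀ n (a : G n), op 0 n 1 a = cast (congrArg G (Nat.zero_add n).symm) a)
    (hunit_right : ∀ m (a : G m), op m 0 a 1 = a)
    (S : Set ℕ) (hcof : ∀ N : ℕ, ∃ s ∈ S, N ≤ s)
    (hdagger : ∀ n ∈ S, ∀ a : G n, ∃ c ∈ commutator (G (n + n)),
      op n n a 1 = op n n 1 a * c)
    (Ginf : Type*) [Group Ginf] (ι : ∀ n, G n →* Ginf)
    (hcompat : ∀ n (a : G n), ι (n + 1) (op n 1 a 1) = ι n a)
    (hsurj : ∀ g : Ginf, ∃ n a, ι n a = g)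
    (hinj : ∀ n (a b : G n), ι n a = ι n b →
      ∃ k, ∃ h : n ≤ k, stabTo G op h a = stabTo G op h b) :
    ⁅commutator Ginf, commutator Ginf⁆ = commutator Ginf := by
  -- ι is compatible with stabTo
  have ι_stab : ∀ {n k : ℕ} (h : n ≤ k) (a : G n), ι k (stabTo G op h a) = ι n a := by
    intro n k h a
    induction k, h using Nat.le_induction with
    | base => rw [stab_self]
    | succ k hk ih => rw [stab_succ G op hk a, hcompat k, ih]
  -- ι absorbs right units
  have ι_op_one : ∀ n k (a : G n), ι (n + k) (op n k a 1) = ι n a := by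
    intro n k
    induction k with
    | zero =>
      intro a
      rw [hunit_right]; rfl
    | succ k ih =>
      intro a
      have h1 := hassoc n k 1 a 1 1
      rw [aux_one_op_one G op hop k 1] at h1
      have h3 : cast (congrArg G (Nat.add_assoc n k 1).symm) (op n (k + 1) a 1)
          = op n (k + 1) a 1 := cast_eq_iff_heq.mpr HEq.rfl
      have h2 : op (n + k) 1 (op n k a 1) 1 = op n (k + 1) a 1 := by rw [h1, h3]
      rw [← h2]
      exact (hcompat (n + k) (op n k a 1)).trans (ih a)
  -- interchange commutation
  have key_comm : ∀ m (u v : G m), op m m u 1 * op m m 1 v = op m m 1 v * op m m u 1 := by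
    intro m u v
    rw [← hop m m u 1 1 v, ← hop m m 1 u v 1]
    simp
  set D := ⁅commutator Ginf, commutator Ginf⁆ with hD
  have hDnormal : D.Normal := Subgroup.commutator_normal _ _
  apply le_antisymm
  · exact Subgroup.commutator_le_left _ _
  · rw [commutator_def]
    rw [Subgroup.commutator_le]
    intro x _ y _
    obtain ⟨n₁, a₁, hx⟩ := hsurj x
    obtain ⟨n₂, b₂, hy⟩ := hsurj y
    obtain ⟨n, hnS, hn⟩ := hcof (max n₁ n₂)
    set a : G n := stabTo G op (le_trans (le_max_left n₁ n₂) hn) a₁ with ha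
    set b : G n := stabTo G op (le_trans (le_max_right n₁ n₂) hn) b₂ with hb
    have hxa : ι n a = x := by rw [ha, ι_stab, hx]
    have hyb : ι n b = y := by rw [hb, ι_stab, hy]
    obtain ⟨c, hcmem, hc⟩ := hdagger n hnS a
    set q : Ginf := ι (n + n) (op n n 1 a) with hq
    set c₁ : Ginf := ι (n + n) c with hc₁def
    have hx2 : x = q * c₁ := by
      rw [← hxa, ← ι_op_one n n a, hc, map_mul]
    have hy2 : y = ι (n + n) (op n n b 1) := by rw [ι_op_one n n b, hyb]
    have hc₁ : c₁ ∈ commutator Ginf := my_map_commutator (ι (n + n)) hcmem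
    have hcomm_qy : q * y = y * q := by
      rw [hy2, hq, ← map_mul, ← map_mul]
      exact congrArg (ι (n + n)) (key_comm n b a).symm
    have hred : ⁅x, y⁆ = q * ⁅c₁, y⁆ * q⁻¹ := by
      rw [hx2]; exact comm_aux1 q c₁ y hcomm_qy
    -- now show ⁅c₁, y⁆ ∈ D
    obtain ⟨m, hmS, hm⟩ := hcof (n + n)
    set c' : G m := stabTo G op hm c with hc'def
    set b' : G m := stabTo G op (le_trans (Nat.le_add_left n n) hm) b with hb'def
    have hc' : c' ∈ commutator (G m) :=
      my_map_commutator (stabToHom G op hop hm) hcmem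
    have hιc' : ι m c' = c₁ := by rw [hc'def, ι_stab]
    have hιb' : ι m b' = y := by rw [hb'def, ι_stab, hyb]
    obtain ⟨d, hdmem, hd⟩ := hdagger m hmS b'
    set r : Ginf := ι (m + m) (op m m 1 b') with hr
    have hy3 : y = r * ι (m + m) d := by
      rw [← hιb', ← ι_op_one m m b', hd, map_mul]
    have hc₁2 : c₁ = ι (m + m) (op m m c' 1) := by rw [ι_op_one m m c', hιc']
    have hucomm : c₁ * r = r * c₁ := by
      rw [hc₁2, hr, ← map_mul, ← map_mul]
      exact congrArg (ι (m + m)) (key_comm m c' b')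
    have hc'' : ι (m + m) (op m m c' 1) ∈ commutator Ginf :=
      my_map_commutator ((ι (m + m)).comp (opRightHom G op hop m m)) hc'
    have hd₁ : ι (m + m) d ∈ commutator Ginf := my_map_commutator (ι (m + m)) hdmem
    have hinner : ⁅c₁, ι (m + m) d⁆ ∈ D := by
      rw [hc₁2]
      exact Subgroup.commutator_mem_commutator hc'' hd₁
    have hcy : ⁅c₁, y⁆ = r * ⁅c₁, ι (m + m) d⁆ * r⁻¹ := by
      rw [hy3]; exact comm_aux2 c₁ r (ι (m + m) d) hucomm
    have hconj1 : ⁅c₁, y⁆ ∈ D := by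
      rw [hcy]
      exact hDnormal.conj_mem _ hinner r
    rw [hred]
    exact hDnormal.conj_mem _ hconj1 q
end
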